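/- Let m ≥ 1, let d : Fin m → ℝ, and let g be an m×m complex matrix. For t ∈ ℝ let c_t(g) be the m×m matrix with (i,j) entry exp(t(d_j − d_i))·g_{ij}. Then c_t(g) converges (entrywise) as t → +∞ if and only if g_{ij} = 0 whenever d_i < d_j; and in that case the limit is the matrix q_d(g) with (i,j) entry equal to g_{ij} if d_i = d_j and to 0 otherwise. -/

import Mathlib

open Filter Real

lemma entry_tendsto_aux (c : ℝ) (z : ℂ) (h : c < 0) :
    Tendsto (fun t : ℝ => Real.exp (t * c) • z) atTop (nhds 0) := by
  have h1 : Tendsto (fun t : ℝ => Real.exp (t * c)) atTop (nhds 0) :=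
    Real.tendsto_exp_atBot.comp (tendsto_id.atTop_mul_const_of_neg h)
  simpa using h1.smul_const z

lemma entry_key_aux (c : ℝ) (z : ℂ) (hz : z ≠ 0) (hc : 0 < c) (L : ℂ)
    (h : Tendsto (fun t : ℝ => Real.exp (t * c) • z) atTop (nhds L)) : False := by
  have h1 : Tendsto (fun t : ℝ => ‖Real.exp (t * c) • z‖) atTop (nhds ‖L‖) := h.norm
  have h2 : Tendsto (fun t : ℝ => ‖Real.exp (t * c) • z‖) atTop atTop := by
    have : Tendsto (fun t : ℝ => Real.exp (t * c)) atTop atTop :=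
      Real.tendsto_exp_atTop.comp (tendsto_id.atTop_mul_const hc)
    have := this.atTop_mul_const (norm_pos_iff.mpr hz)
    apply this.congr (fun t => ?_)
    rw [norm_smul, Real.norm_eq_abs, abs_of_pos (Real.exp_pos _)]
  exact not_tendsto_nhds_of_tendsto_atTop h2 _ h1

/-- Let m ≥ 1, d : Fin m → ℝ, and g an m×m complex matrix. For t ∈ ℝ let c_t(g) be the matrix
with (i,j) entry exp(t(d_j − d_i))·g_{ij}. Then c_t(g) converges (entrywise) as t → +∞ if and
only if g_{ij} = 0 whenever d_i < d_j; and in that case the limit is the matrix q_d(g) with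
(i,j) entry g_{ij} if d_i = d_j and 0 otherwise. -/
theorem stmt_8 (m : ℕ) (hm : 1 ≤ m) (d : Fin m → ℝ)
    (g : Matrix (Fin m) (Fin m) ℂ) :
    ((∃ L : Matrix (Fin m) (Fin m) ℂ,
        Filter.Tendsto
          (fun t : ℝ => Matrix.of fun i j : Fin m =>
            Real.exp (t * (d j - d i)) • g i j)
          Filter.atTop (nhds L)) ↔
      ∀ i j : Fin m, d i < d j → g i j = 0) ∧
    ((∀ i j : Fin m, d i < d j → g i j = 0) →
      Filter.Tendsto
        (fun t : ℝ => Matrix.of fun i j : Fin m =>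
          Real.exp (t * (d j - d i)) • g i j)
        Filter.atTop
        (nhds (Matrix.of fun i j : Fin m => if d i = d j then g i j else 0))) := by
  have second : (∀ i j : Fin m, d i < d j → g i j = 0) →
      Filter.Tendsto
        (fun t : ℝ => Matrix.of fun i j : Fin m =>
          Real.exp (t * (d j - d i)) • g i j)
        Filter.atTop
        (nhds (Matrix.of fun i j : Fin m => if d i = d j then g i j else 0)) := by
    intro h
    refine tendsto_pi_nhds.mpr ?_
    intro i
    rw [tendsto_pi_nhds]
    intro j
    simp only [Matrix.of_apply]
    rcases lt_trichotomy (d i) (d j) with hlt | heq | hgt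
    · simp only [h i j hlt, smul_zero, hlt.ne, if_false]
      exact tendsto_const_nhds
    · simp only [heq, sub_self, mul_zero, Real.exp_zero, one_smul, if_pos rfl]
      exact tendsto_const_nhds
    · have := entry_tendsto_aux (d j - d i) (g i j) (by linarith)
      simpa [hgt.ne'] using this
  refine ⟨⟨?_, fun h => ⟨_, second h⟩⟩, second⟩
  rintro ⟨L, hL⟩ i j hij
  by_contra hz
  have h1 := tendsto_pi_nhds.mp (tendsto_pi_nhds.mp hL i) j
  simp only [Matrix.of_apply] at h1
  exact entry_key_aux (d j - d i) (g i j) hz (by linarith) (L i j) h1
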